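/- Laplace's method (boundary case, quadratic maximum): let ψ : [a,b) → ℝ be continuous at a with ψ(a) ≠ 0, and φ : [a,b) → ℝ be C² with φ' < 0 on (a,b), φ'(a) = 0, and φ''(a) < 0. Assume f(ε) := ∫_a^b exp(φ(x)/ε) ψ(x) dx is finite for small ε > 0. Then f(ε) ~ sqrt(πε/(2|φ''(a)|)) exp(φ(a)/ε) ψ(a) as ε → 0⁺. -/

import Mathlib

open MeasureTheory Real Filter Set

set_option maxHeartbeats 2000000

section LaplaceAux
open MeasureTheory Real Filter Set

lemma lap_exp_div_sqrt (m : ℝ) (hm : 0 < m) :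
    Tendsto (fun ε : ℝ => Real.exp (-m / ε) / Real.sqrt ε) (nhdsWithin 0 (Ioi 0)) (nhds 0) := by
  have h := (tendsto_rpow_mul_exp_neg_mul_atTop_nhds_zero ((1/2 : ℝ)) m hm).comp
    tendsto_inv_nhdsGT_zero
  apply h.congr'
  filter_upwards [self_mem_nhdsWithin] with ε (hε : 0 < ε)
  show (ε⁻¹) ^ ((1/2:ℝ)) * Real.exp (-m * ε⁻¹) = _
  rw [Real.inv_rpow hε.le, ← Real.sqrt_eq_rpow, ← div_eq_mul_inv, inv_mul_eq_div]

lemma lap_gauss_scaled (k c : ℝ) (hk : 0 < k) (hc : 0 < c) :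
    Tendsto (fun ε : ℝ => (∫ t in (0:ℝ)..c, Real.exp (-(k * t ^ 2) / (2 * ε))) / Real.sqrt ε)
      (nhdsWithin 0 (Ioi 0)) (nhds (Real.sqrt (π / (2 * k)))) := by
  have hint : IntegrableOn (fun u : ℝ => Real.exp (-(k/2) * u ^ 2)) (Ioi 0) :=
    (integrable_exp_neg_mul_sq (by linarith)).integrableOn
  have hlim : Tendsto (fun ε : ℝ => c / Real.sqrt ε) (nhdsWithin 0 (Ioi 0)) atTop := by
    have h1 : Tendsto (fun ε : ℝ => Real.sqrt ε) (nhdsWithin 0 (Ioi 0)) (nhdsWithin 0 (Ioi 0)) := by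
      apply tendsto_nhdsWithin_of_tendsto_nhds_of_eventually_within
      · simpa using (Real.continuous_sqrt.tendsto 0).mono_left nhdsWithin_le_nhds
      · filter_upwards [self_mem_nhdsWithin] with ε (hε : 0 < ε)
        exact Real.sqrt_pos.2 hε
    have h2 : Tendsto (fun x : ℝ => c * x⁻¹) (nhdsWithin 0 (Ioi 0)) atTop :=
      (tendsto_inv_nhdsGT_zero).const_mul_atTop hc
    exact (h2.comp h1).congr (fun ε => by rw [Function.comp_apply, div_eq_mul_inv])
  have key := intervalIntegral_tendsto_integral_Ioi 0 hint hlim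
  have hval : ∫ u in Ioi (0:ℝ), Real.exp (-(k/2) * u ^ 2) = Real.sqrt (π / (2*k)) := by
    rw [integral_gaussian_Ioi]
    rw [show π / (k/2) = 4 * (π / (2*k)) by field_simp; ring]
    rw [show (4:ℝ) = 2^2 by norm_num, Real.sqrt_mul (by positivity), Real.sqrt_sq (by norm_num)]
    ring
  rw [hval] at key
  apply key.congr'
  filter_upwards [self_mem_nhdsWithin] with ε (hε : 0 < ε)
  have hsε : Real.sqrt ε ≠ 0 := ne_of_gt (Real.sqrt_pos.2 hε)
  have h3 : (∫ t in (0:ℝ)..c, Real.exp (-(k * t ^ 2) / (2 * ε)))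
      = Real.sqrt ε * ∫ u in (0:ℝ)..c/Real.sqrt ε, Real.exp (-(k/2) * u ^ 2) := by
    have h4 := intervalIntegral.integral_comp_div (a := (0:ℝ)) (b := c)
      (fun u => Real.exp (-(k/2) * u ^ 2)) hsε
    rw [zero_div, smul_eq_mul] at h4
    rw [← h4]
    apply intervalIntegral.integral_congr
    intro t _
    simp only
    congr 1
    rw [div_pow, Real.sq_sqrt hε.le]
    field_simp
  rw [h3, mul_comm, mul_div_assoc, div_self hsε, mul_one]


theorem lap_aux (a : ℝ) (b : EReal) (hab : (a : EReal) < b)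
    (φ ψ : ℝ → ℝ)
    (hψ : ContinuousWithinAt ψ (Ici a) a) (hψa : 0 < ψ a)
    (hφ : ContDiffOn ℝ 2 φ {x : ℝ | a ≤ x ∧ (x : EReal) < b})
    (hφ' : ∀ x : ℝ, a < x → (x : EReal) < b → deriv φ x < 0)
    (hφ'a : deriv φ a = 0)
    (hφ''a : iteratedDeriv 2 φ a < 0)
    (hInt : ∀ᶠ ε in nhdsWithin (0 : ℝ) (Ioi 0),
      IntegrableOn (fun x => Real.exp (φ x / ε) * ψ x) {x : ℝ | a ≤ x ∧ (x : EReal) < b}) :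
    Tendsto
      (fun ε : ℝ =>
        (∫ x in {x : ℝ | a ≤ x ∧ (x : EReal) < b}, Real.exp (φ x / ε) * ψ x) /
          (Real.sqrt (Real.pi * ε / (2 * |iteratedDeriv 2 φ a|)) * Real.exp (φ a / ε) * ψ a))
      (nhdsWithin (0 : ℝ) (Ioi 0)) (nhds 1) := by
  set S := {x : ℝ | a ≤ x ∧ (x : EReal) < b} with hSdef
  set Q := |iteratedDeriv 2 φ a| with hQdef
  have hQ : 0 < Q := abs_pos.mpr (ne_of_lt hφ''a)
  have hQeq : iteratedDeriv 2 φ a = -Q := by rw [hQdef, abs_of_neg hφ''a, neg_neg]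
  obtain ⟨b', hbb', hab'⟩ : ∃ b' : ℝ, (b' : EReal) ≤ b ∧ a < b' := by
    induction b with
    | bot => exact absurd hab (by simp)
    | coe r => exact ⟨r, le_refl _, by exact_mod_cast hab⟩
    | top => exact ⟨a + 1, le_top, by linarith⟩
  have hmemS : ∀ x : ℝ, a ≤ x → x < b' → x ∈ S := fun x h1 h2 =>
    ⟨h1, lt_of_lt_of_le (EReal.coe_lt_coe_iff.mpr h2) hbb'⟩
  have hSmeas : MeasurableSet S := by
    have : S = Ici a ∩ (fun x : ℝ => (x : EReal)) ⁻¹' Iio b := rfl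
    rw [this]
    exact measurableSet_Ici.inter (measurableSet_Iio.preimage measurable_coe_real_ereal)
  -- differentiability of φ at interior points
  have hφdiff : ∀ t : ℝ, a < t → (t : EReal) < b → DifferentiableAt ℝ φ t := by
    intro t h1 h2
    obtain ⟨x', hx1, hx2⟩ := EReal.exists_between_coe_real h2
    have hsub : Ioo a x' ⊆ S := fun y hy =>
      ⟨hy.1.le, lt_of_lt_of_le (EReal.coe_lt_coe_iff.mpr hy.2) hx2.le⟩
    have : ContDiffAt ℝ 2 φ t := hφ.contDiffAt
      (mem_nhds_iff.mpr ⟨Ioo a x', hsub, isOpen_Ioo, ⟨h1, by exact_mod_cast hx1⟩⟩)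
    exact this.differentiableAt two_ne_zero
  -- HasDerivAt for deriv φ at a
  have hg : HasDerivAt (deriv φ) (-Q) a := by
    have h2 : iteratedDeriv 2 φ = deriv (deriv φ) := by
      rw [show (2:ℕ) = 1 + 1 from rfl, iteratedDeriv_succ, iteratedDeriv_one]
    have hdd : deriv (deriv φ) a = -Q := by rw [← h2]; exact hQeq
    have hdiffg : DifferentiableAt ℝ (deriv φ) a := by
      by_contra h
      rw [deriv_zero_of_not_differentiableAt h] at hdd
      linarith
    have := hdiffg.hasDerivAt
    rwa [hdd] at this
  -- slope limit
  have hslope : Tendsto (fun x => deriv φ x / (x - a)) (nhdsWithin a (Ioi a)) (nhds (-Q)) := by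
    have := hasDerivAt_iff_tendsto_slope.mp hg
    have h2 := this.mono_left (nhdsWithin_mono a (fun x hx => ne_of_gt hx : Ioi a ⊆ {a}ᶜ))
    apply h2.congr
    intro x
    rw [slope_def_field, hφ'a, sub_zero]
  have hsq : (0:ℝ) < Real.sqrt (π/(2*Q)) := Real.sqrt_pos.2 (by positivity)
  rw [Metric.tendsto_nhds]
  intro r hr
  -- choose δ
  have hUcont : ContinuousAt
      (fun δ : ℝ => (1+δ) * (Real.sqrt (π/(2*(Q-δ))) / Real.sqrt (π/(2*Q)))) 0 := by
    have h1 : ContinuousAt (fun δ : ℝ => π/(2*(Q-δ))) 0 :=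
      ContinuousAt.div continuousAt_const (by fun_prop) (by simpa using ne_of_gt hQ)
    exact (by fun_prop : ContinuousAt (fun δ : ℝ => (1:ℝ)+δ) 0).mul
      ((Real.continuous_sqrt.continuousAt.comp h1).div_const _)
  have hLcont : ContinuousAt
      (fun δ : ℝ => (1-δ) * (Real.sqrt (π/(2*(Q+δ))) / Real.sqrt (π/(2*Q)))) 0 := by
    have h1 : ContinuousAt (fun δ : ℝ => π/(2*(Q+δ))) 0 :=
      ContinuousAt.div continuousAt_const (by fun_prop) (by simpa using ne_of_gt hQ)
    exact (by fun_prop : ContinuousAt (fun δ : ℝ => (1:ℝ)-δ) 0).mul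
      ((Real.continuous_sqrt.continuousAt.comp h1).div_const _)
  have hUev : ∀ᶠ δ in nhdsWithin (0:ℝ) (Ioi 0),
      (1+δ) * (Real.sqrt (π/(2*(Q-δ))) / Real.sqrt (π/(2*Q))) < 1 + r := by
    have := hUcont.tendsto.mono_left (nhdsWithin_le_nhds (s := Ioi (0:ℝ)))
    simp only [add_zero, sub_zero, one_mul, div_self (ne_of_gt hsq)] at this
    exact this.eventually (eventually_lt_nhds (by linarith))
  have hLev : ∀ᶠ δ in nhdsWithin (0:ℝ) (Ioi 0),
      1 - r < (1-δ) * (Real.sqrt (π/(2*(Q+δ))) / Real.sqrt (π/(2*Q))) := by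
    have := hLcont.tendsto.mono_left (nhdsWithin_le_nhds (s := Ioi (0:ℝ)))
    simp only [add_zero, sub_zero, one_mul, div_self (ne_of_gt hsq)] at this
    exact this.eventually (eventually_gt_nhds (by linarith))
  have hsmall : ∀ᶠ δ in nhdsWithin (0:ℝ) (Ioi 0), δ < min Q 1 :=
    eventually_nhdsWithin_of_eventually_nhds (eventually_lt_nhds (lt_min hQ one_pos))
  obtain ⟨δ, ⟨hδU, hδL⟩, hδsmall, hδpos⟩ :=
    ((hUev.and hLev).and (hsmall.and self_mem_nhdsWithin)).exists
  have hδQ : δ < Q := lt_of_lt_of_le hδsmall (min_le_left _ _)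
  have hδ1 : δ < 1 := lt_of_lt_of_le hδsmall (min_le_right _ _)
  -- choose c
  have hev_slope : ∀ᶠ x in nhdsWithin a (Ioi a), |deriv φ x / (x - a) - (-Q)| < δ := by
    have := hslope.eventually (Metric.ball_mem_nhds (-Q) hδpos)
    simpa [Real.dist_eq] using this
  have hev_psi : ∀ᶠ x in nhdsWithin a (Ioi a), |ψ x - ψ a| < δ * ψ a := by
    have h1 := hψ.eventually (Metric.ball_mem_nhds (ψ a) (by positivity : (0:ℝ) < δ * ψ a))
    have h2 := h1.filter_mono (nhdsWithin_mono a (Ioi_subset_Ici le_rfl))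
    simpa [Real.dist_eq] using h2
  have hev_b' : ∀ᶠ x in nhdsWithin a (Ioi a), x ∈ Ioo a b' :=
    eventually_of_mem (Ioo_mem_nhdsGT_of_mem ⟨le_rfl, hab'⟩) (fun x hx => hx)
  obtain ⟨u, hu, huP⟩ := mem_nhdsGT_iff_exists_Ioc_subset.mp
    ((hev_slope.and (hev_psi.and hev_b')).filter_mono le_rfl)
  set c := u - a with hcdef
  have hcpos : 0 < c := sub_pos.2 hu
  have hIoc : Ioc a (a + c) = Ioc a u := by rw [hcdef]; ring_nf
  have hP : ∀ x ∈ Ioc a (a + c),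
      |deriv φ x / (x - a) - (-Q)| < δ ∧ |ψ x - ψ a| < δ * ψ a ∧ x ∈ Ioo a b' := by
    intro x hx; exact huP (hIoc ▸ hx)
  have hacb' : a + c < b' := (hP (a + c) ⟨by linarith, le_rfl⟩).2.2.2
  have hIccS : Icc a (a + c) ⊆ S := fun x hx => hmemS x hx.1 (lt_of_le_of_lt hx.2 hacb')
  -- bounds for deriv and ψ
  have hc2 : ∀ x ∈ Ioc a (a + c),
      -(Q + δ) * (x - a) ≤ deriv φ x ∧ deriv φ x ≤ -(Q - δ) * (x - a) := by
    intro x hx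
    have h1 := (hP x hx).1
    have hxa : 0 < x - a := sub_pos.2 hx.1
    rw [abs_lt] at h1
    have hlow : -(Q + δ) < deriv φ x / (x - a) := by linarith [h1.1]
    have hhigh : deriv φ x / (x - a) < -(Q - δ) := by linarith [h1.2]
    exact ⟨((lt_div_iff₀ hxa).mp hlow).le, ((div_lt_iff₀ hxa).mp hhigh).le⟩
  have hc3 : ∀ x ∈ Icc a (a + c), (1 - δ) * ψ a ≤ ψ x ∧ ψ x ≤ (1 + δ) * ψ a := by
    intro x hx
    rcases eq_or_lt_of_le hx.1 with h | h
    · rw [← h]; constructor <;> nlinarith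
    · have := (hP x ⟨h, hx.2⟩).2.1
      rw [abs_lt] at this
      constructor <;> nlinarith [this.1, this.2]
  -- quadratic Taylor-type bounds on [a, a+c]
  have hderivh : ∀ (k : ℝ), ∀ t ∈ Ioo a (a + c),
      HasDerivAt (fun x => φ x + k * (x - a) ^ 2 / 2) (deriv φ t + k * (t - a)) t := by
    intro k t ht
    have h1 : HasDerivAt φ (deriv φ t) t :=
      (hφdiff t ht.1 (lt_of_lt_of_le (EReal.coe_lt_coe_iff.mpr
        (lt_trans ht.2 hacb')) hbb')).hasDerivAt
    have h2 : HasDerivAt (fun x : ℝ => k * (x - a) ^ 2 / 2) (k * (t - a)) t := by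
      have h3 : HasDerivAt (fun x : ℝ => (x - a) ^ 2) (2 * (t - a)) t := by
        simpa using ((hasDerivAt_id t).sub_const a).fun_pow 2
      have := (h3.const_mul k).div_const 2
      exact this.congr_deriv (by ring)
    exact h1.add h2
  have hcontH : ∀ k : ℝ, ContinuousOn (fun x => φ x + k * (x - a) ^ 2 / 2) (Icc a (a + c)) :=
    fun k => ((hφ.continuousOn).mono hIccS).add (by fun_prop)
  have hc4 : ∀ x ∈ Icc a (a + c),
      φ a - (Q + δ) * (x - a) ^ 2 / 2 ≤ φ x ∧ φ x ≤ φ a - (Q - δ) * (x - a) ^ 2 / 2 := by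
    intro x hx
    constructor
    · have hmono : MonotoneOn (fun x => φ x + (Q + δ) * (x - a) ^ 2 / 2) (Icc a (a + c)) := by
        apply monotoneOn_of_deriv_nonneg (convex_Icc _ _) (hcontH _)
        · intro t ht
          rw [interior_Icc] at ht
          exact ((hderivh _ t ht).differentiableAt).differentiableWithinAt
        · intro t ht
          rw [interior_Icc] at ht
          rw [(hderivh _ t ht).deriv]
          have := (hc2 t ⟨ht.1, ht.2.le⟩).1
          linarith
      have := hmono (left_mem_Icc.2 (by linarith)) hx hx.1
      simp only [sub_self] at this
      simp only [zero_pow, ne_eq, OfNat.ofNat_ne_zero, not_false_eq_true, mul_zero,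
        zero_div, add_zero] at this
      linarith
    · have hmono : AntitoneOn (fun x => φ x + (Q - δ) * (x - a) ^ 2 / 2) (Icc a (a + c)) := by
        apply antitoneOn_of_deriv_nonpos (convex_Icc _ _) (hcontH _)
        · intro t ht
          rw [interior_Icc] at ht
          exact ((hderivh _ t ht).differentiableAt).differentiableWithinAt
        · intro t ht
          rw [interior_Icc] at ht
          rw [(hderivh _ t ht).deriv]
          have := (hc2 t ⟨ht.1, ht.2.le⟩).2
          linarith
      have := hmono (left_mem_Icc.2 (by linarith)) hx hx.1
      simp only [sub_self] at this
      simp only [zero_pow, ne_eq, OfNat.ofNat_ne_zero, not_false_eq_true, mul_zero,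
        zero_div, add_zero] at this
      linarith
  -- φ(a+c) < φ(a)
  have hm : 0 < φ a - φ (a + c) := by
    have := (hc4 (a + c) (right_mem_Icc.2 (by linarith))).2
    have h2 : 0 < (Q - δ) * ((a + c) - a) ^ 2 / 2 := by
      have : ((a + c) - a) = c := by ring
      rw [this]
      exact div_pos (mul_pos (by linarith) (pow_pos hcpos 2)) two_pos
    linarith
  -- tail bound on φ
  have htail : ∀ x ∈ S, a + c ≤ x → φ x ≤ φ (a + c) := by
    intro x hxS hxc
    have hIccS2 : Icc (a + c) x ⊆ S := fun t ht =>
      ⟨by linarith [ht.1], lt_of_le_of_lt (EReal.coe_le_coe_iff.mpr ht.2) hxS.2⟩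
    have hmono : AntitoneOn φ (Icc (a + c) x) := by
      apply antitoneOn_of_deriv_nonpos (convex_Icc _ _) ((hφ.continuousOn).mono hIccS2)
      · intro t ht
        rw [interior_Icc] at ht
        have htb : (t : EReal) < b := (hIccS2 ⟨ht.1.le, ht.2.le⟩).2
        exact (hφdiff t (by linarith [ht.1]) htb).differentiableWithinAt
      · intro t ht
        rw [interior_Icc] at ht
        have htb : (t : EReal) < b := (hIccS2 ⟨ht.1.le, ht.2.le⟩).2
        exact (hφ' t (by linarith [ht.1]) htb).le
    exact hmono (left_mem_Icc.2 hxc) (right_mem_Icc.2 hxc) hxc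
  -- choose ε₁
  obtain ⟨ε₁, hε₁pos, hε₁⟩ : ∃ ε₁ : ℝ, 0 < ε₁ ∧ ∀ ε ∈ Ioc (0:ℝ) ε₁,
      IntegrableOn (fun x => Real.exp (φ x / ε) * ψ x) S := by
    obtain ⟨u, hu, huP⟩ := mem_nhdsGT_iff_exists_Ioc_subset.mp hInt
    exact ⟨u, hu, fun ε hε => huP hε⟩
  have hIntε₁ : IntegrableOn (fun x => Real.exp (φ x / ε₁) * ψ x) S :=
    hε₁ ε₁ ⟨hε₁pos, le_rfl⟩
  have hStmeas : MeasurableSet (S ∩ Ioi (a + c)) := hSmeas.inter measurableSet_Ioi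
  set K := ∫ x in S ∩ Ioi (a + c), Real.exp (φ x / ε₁) * |ψ x| with hKdef
  have hK0 : 0 ≤ K := setIntegral_nonneg hStmeas (fun x _ => by positivity)
  have habsK : IntegrableOn (fun x => Real.exp (φ x / ε₁) * |ψ x|) (S ∩ Ioi (a + c)) := by
    refine ((hIntε₁.mono_set inter_subset_left).abs).congr ?_
    exact ae_of_all _ (fun x => by
      show |Real.exp (φ x / ε₁) * ψ x| = Real.exp (φ x / ε₁) * |ψ x|
      rw [abs_mul, abs_of_pos (Real.exp_pos _)])
  -- main functions
  set D : ℝ → ℝ := fun ε => Real.sqrt (π * ε / (2 * Q)) * Real.exp (φ a / ε) * ψ a with hDdef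
  set E : ℝ → ℝ := fun ε => K * Real.exp (φ (a + c) * (1 / ε - 1 / ε₁)) / D ε with hEdef
  set Jm : ℝ → ℝ := fun ε => ∫ t in (0:ℝ)..c, Real.exp (-((Q + δ) * t ^ 2) / (2 * ε)) with hJmdef
  set Jp : ℝ → ℝ := fun ε => ∫ t in (0:ℝ)..c, Real.exp (-((Q - δ) * t ^ 2) / (2 * ε)) with hJpdef
  have hDpos : ∀ ε : ℝ, 0 < ε → 0 < D ε := fun ε hε =>
    mul_pos (mul_pos (Real.sqrt_pos.2 (by positivity)) (Real.exp_pos _)) hψa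
  have hsqrts : ∀ ε : ℝ, 0 < ε → Real.sqrt (π * ε / (2 * Q))
      = Real.sqrt (π / (2 * Q)) * Real.sqrt ε := by
    intro ε hε
    rw [← Real.sqrt_mul (by positivity : (0:ℝ) ≤ π / (2 * Q))]
    congr 1
    ring
  -- E tends to 0
  have hE0 : Tendsto E (nhdsWithin 0 (Ioi 0)) (nhds 0) := by
    have hcst := (lap_exp_div_sqrt (φ a - φ (a + c)) hm).const_mul
      (K * Real.exp (-φ (a + c) / ε₁) / (Real.sqrt (π / (2 * Q)) * ψ a))
    rw [mul_zero] at hcst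
    apply hcst.congr'
    filter_upwards [self_mem_nhdsWithin] with ε (hε : 0 < ε)
    have hexpeq : Real.exp (φ (a + c) * (1 / ε - 1 / ε₁))
        = Real.exp (-(φ a - φ (a + c)) / ε) * Real.exp (φ a / ε) * Real.exp (-φ (a + c) / ε₁) := by
      rw [← Real.exp_add, ← Real.exp_add]
      congr 1
      field_simp
      ring
    rw [hEdef]
    simp only
    rw [hexpeq, hDdef]
    simp only
    rw [hsqrts ε hε]
    have h1 : Real.sqrt (π / (2 * Q)) ≠ 0 := ne_of_gt hsq
    have h2 : Real.sqrt ε ≠ 0 := ne_of_gt (Real.sqrt_pos.2 hε)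
    field_simp
  -- limits of the comparison functions
  have hJlim : ∀ k : ℝ, 0 < k →
      Tendsto (fun ε => (∫ t in (0:ℝ)..c, Real.exp (-(k * t ^ 2) / (2 * ε)))
        / Real.sqrt (π * ε / (2 * Q))) (nhdsWithin 0 (Ioi 0))
        (nhds (Real.sqrt (π / (2 * k)) / Real.sqrt (π / (2 * Q)))) := by
    intro k hk
    have h1 := (lap_gauss_scaled k c hk hcpos).div_const (Real.sqrt (π / (2 * Q)))
    apply h1.congr'
    filter_upwards [self_mem_nhdsWithin] with ε (hε : 0 < ε)
    rw [hsqrts ε hε, div_div, mul_comm (Real.sqrt (π / (2 * Q)))]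
  have hA : Tendsto (fun ε => (1 - δ) * (Jm ε / Real.sqrt (π * ε / (2 * Q))) - E ε)
      (nhdsWithin 0 (Ioi 0))
      (nhds ((1 - δ) * (Real.sqrt (π / (2 * (Q + δ))) / Real.sqrt (π / (2 * Q))))) := by
    have := ((hJlim (Q + δ) (by linarith)).const_mul (1 - δ)).sub hE0
    simpa using this
  have hB : Tendsto (fun ε => (1 + δ) * (Jp ε / Real.sqrt (π * ε / (2 * Q))) + E ε)
      (nhdsWithin 0 (Ioi 0))
      (nhds ((1 + δ) * (Real.sqrt (π / (2 * (Q - δ))) / Real.sqrt (π / (2 * Q))))) := by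
    have := ((hJlim (Q - δ) (by linarith)).const_mul (1 + δ)).add hE0
    simpa using this
  -- main eventual estimate
  filter_upwards [hInt, Ioc_mem_nhdsGT_of_mem (by exact ⟨le_rfl, hε₁pos⟩),
    self_mem_nhdsWithin, hA.eventually (eventually_gt_nhds hδL),
    hB.eventually (eventually_lt_nhds hδU)] with ε hIntε hεIoc hεpos hAε hBε
  rw [mem_Ioi] at hεpos
  obtain ⟨-, hεε₁⟩ := hεIoc
  have hDp : 0 < D ε := hDpos ε hεpos
  -- splitting the integral
  have hIcS : IntegrableOn (fun x => Real.exp (φ x / ε) * ψ x) (Icc a (a + c)) :=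
    hIntε.mono_set hIccS
  have hItS : IntegrableOn (fun x => Real.exp (φ x / ε) * ψ x) (S ∩ Ioi (a + c)) :=
    hIntε.mono_set inter_subset_left
  have hunion : S = Icc a (a + c) ∪ (S ∩ Ioi (a + c)) := by
    ext x
    constructor
    · intro hx
      rcases le_or_gt x (a + c) with h | h
      · exact Or.inl ⟨hx.1, h⟩
      · exact Or.inr ⟨hx, h⟩
    · intro hx
      rcases hx with h | h
      · exact hIccS h
      · exact h.1
  have hNsplit : (∫ x in S, Real.exp (φ x / ε) * ψ x)
      = (∫ x in Icc a (a + c), Real.exp (φ x / ε) * ψ x)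
        + ∫ x in S ∩ Ioi (a + c), Real.exp (φ x / ε) * ψ x := by
    conv_lhs => rw [hunion]
    exact setIntegral_union
      (disjoint_left.mpr (fun x hx hx2 => absurd hx2.2 (not_lt.2 hx.2)))
      hStmeas hIcS hItS
  -- Gaussian comparison integrals
  have hgauss_int : ∀ k : ℝ, IntegrableOn
      (fun x => Real.exp (-(k * (x - a) ^ 2) / (2 * ε))) (Icc a (a + c)) :=
    fun k => Continuous.integrableOn_Icc (by fun_prop)
  have hshift : ∀ k : ℝ, (∫ x in Icc a (a + c), Real.exp (-(k * (x - a) ^ 2) / (2 * ε)))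
      = ∫ t in (0:ℝ)..c, Real.exp (-(k * t ^ 2) / (2 * ε)) := by
    intro k
    rw [MeasureTheory.integral_Icc_eq_integral_Ioc,
      ← intervalIntegral.integral_of_le (by linarith : a ≤ a + c)]
    have h := intervalIntegral.integral_comp_sub_right (a := a) (b := a + c)
      (fun t => Real.exp (-(k * t ^ 2) / (2 * ε))) a
    simpa using h
  -- lower central bound
  have hlower : ((1 - δ) * ψ a * Real.exp (φ a / ε)) * Jm ε
      ≤ ∫ x in Icc a (a + c), Real.exp (φ x / ε) * ψ x := by
    have hpt : ∀ x ∈ Icc a (a + c),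
        ((1 - δ) * ψ a * Real.exp (φ a / ε)) * Real.exp (-((Q + δ) * (x - a) ^ 2) / (2 * ε))
          ≤ Real.exp (φ x / ε) * ψ x := by
      intro x hx
      have h1 : Real.exp (φ a / ε) * Real.exp (-((Q + δ) * (x - a) ^ 2) / (2 * ε))
          ≤ Real.exp (φ x / ε) := by
        rw [← Real.exp_add]
        apply Real.exp_le_exp.2
        rw [show φ a / ε + -((Q + δ) * (x - a) ^ 2) / (2 * ε)
          = (φ a - (Q + δ) * (x - a) ^ 2 / 2) / ε by field_simp; ring]
        exact div_le_div_of_nonneg_right ((hc4 x hx).1) hεpos.le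
      have h2 := (hc3 x hx).1
      have h3 : (0:ℝ) ≤ (1 - δ) * ψ a := by nlinarith
      calc ((1 - δ) * ψ a * Real.exp (φ a / ε)) * Real.exp (-((Q + δ) * (x - a) ^ 2) / (2 * ε))
          = (Real.exp (φ a / ε) * Real.exp (-((Q + δ) * (x - a) ^ 2) / (2 * ε))) * ((1 - δ) * ψ a) := by
            ring
        _ ≤ Real.exp (φ x / ε) * ψ x :=
            mul_le_mul h1 h2 h3 (Real.exp_pos _).le
    have h2 := setIntegral_mono_on
      ((hgauss_int (Q + δ)).const_mul ((1 - δ) * ψ a * Real.exp (φ a / ε)))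
      hIcS measurableSet_Icc hpt
    rw [MeasureTheory.integral_const_mul, hshift (Q + δ)] at h2
    exact h2
  -- upper central bound
  have hupper : (∫ x in Icc a (a + c), Real.exp (φ x / ε) * ψ x)
      ≤ ((1 + δ) * ψ a * Real.exp (φ a / ε)) * Jp ε := by
    have hpt : ∀ x ∈ Icc a (a + c),
        Real.exp (φ x / ε) * ψ x
          ≤ ((1 + δ) * ψ a * Real.exp (φ a / ε)) * Real.exp (-((Q - δ) * (x - a) ^ 2) / (2 * ε)) := by
      intro x hx
      have h1 : Real.exp (φ x / ε)
          ≤ Real.exp (φ a / ε) * Real.exp (-((Q - δ) * (x - a) ^ 2) / (2 * ε)) := by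
        rw [← Real.exp_add]
        apply Real.exp_le_exp.2
        rw [show φ a / ε + -((Q - δ) * (x - a) ^ 2) / (2 * ε)
          = (φ a - (Q - δ) * (x - a) ^ 2 / 2) / ε by field_simp; ring]
        exact div_le_div_of_nonneg_right ((hc4 x hx).2) hεpos.le
      have h2 := (hc3 x hx).2
      have h4 : (0:ℝ) ≤ ψ x := le_trans (by nlinarith) (hc3 x hx).1
      calc Real.exp (φ x / ε) * ψ x
          ≤ (Real.exp (φ a / ε) * Real.exp (-((Q - δ) * (x - a) ^ 2) / (2 * ε))) * ((1 + δ) * ψ a) :=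
            mul_le_mul h1 h2 h4 (by positivity)
        _ = ((1 + δ) * ψ a * Real.exp (φ a / ε)) * Real.exp (-((Q - δ) * (x - a) ^ 2) / (2 * ε)) := by
            ring
    have h2 := setIntegral_mono_on hIcS
      ((hgauss_int (Q - δ)).const_mul ((1 + δ) * ψ a * Real.exp (φ a / ε)))
      measurableSet_Icc hpt
    rw [MeasureTheory.integral_const_mul, hshift (Q - δ)] at h2
    exact h2
  -- tail bound
  have htailb : |∫ x in S ∩ Ioi (a + c), Real.exp (φ x / ε) * ψ x|
      ≤ K * Real.exp (φ (a + c) * (1 / ε - 1 / ε₁)) := by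
    have h0 : |∫ x in S ∩ Ioi (a + c), Real.exp (φ x / ε) * ψ x|
        ≤ ∫ x in S ∩ Ioi (a + c), |Real.exp (φ x / ε) * ψ x| := by
      calc |∫ x in S ∩ Ioi (a + c), Real.exp (φ x / ε) * ψ x|
          = ‖∫ x in S ∩ Ioi (a + c), Real.exp (φ x / ε) * ψ x‖ := (Real.norm_eq_abs _).symm
        _ ≤ ∫ x in S ∩ Ioi (a + c), ‖Real.exp (φ x / ε) * ψ x‖ :=
            norm_integral_le_integral_norm _
        _ = ∫ x in S ∩ Ioi (a + c), |Real.exp (φ x / ε) * ψ x| := by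
            simp only [Real.norm_eq_abs]
    have hpt : ∀ x ∈ S ∩ Ioi (a + c),
        |Real.exp (φ x / ε) * ψ x|
          ≤ (Real.exp (φ x / ε₁) * |ψ x|) * Real.exp (φ (a + c) * (1 / ε - 1 / ε₁)) := by
      intro x hx
      rw [abs_mul, abs_of_pos (Real.exp_pos _)]
      have hφx : φ x ≤ φ (a + c) := htail x hx.1 (le_of_lt hx.2)
      have hinv : 0 ≤ 1 / ε - 1 / ε₁ := by
        rw [sub_nonneg]
        exact one_div_le_one_div_of_le hεpos hεε₁
      have hexp : Real.exp (φ x / ε) ≤ Real.exp (φ x / ε₁) * Real.exp (φ (a + c) * (1 / ε - 1 / ε₁)) := by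
        rw [← Real.exp_add]
        apply Real.exp_le_exp.2
        have h5 : φ x / ε = φ x / ε₁ + φ x * (1 / ε - 1 / ε₁) := by
          field_simp
          ring
        rw [h5]
        have := mul_le_mul_of_nonneg_right hφx hinv
        linarith
      calc Real.exp (φ x / ε) * |ψ x|
          ≤ (Real.exp (φ x / ε₁) * Real.exp (φ (a + c) * (1 / ε - 1 / ε₁))) * |ψ x| :=
            mul_le_mul_of_nonneg_right hexp (abs_nonneg _)
        _ = (Real.exp (φ x / ε₁) * |ψ x|) * Real.exp (φ (a + c) * (1 / ε - 1 / ε₁)) := by ring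
    have h1 := setIntegral_mono_on hItS.abs
      (habsK.mul_const (Real.exp (φ (a + c) * (1 / ε - 1 / ε₁)))) hStmeas hpt
    rw [MeasureTheory.integral_mul_const] at h1
    exact h0.trans h1
  -- put everything together
  have habs_le : ∀ y z w : ℝ, y ≤ z → z ≤ w → 1 - r < y → w < 1 + r → dist z 1 < r := by
    intro y z w h1 h2 h3 h4
    rw [Real.dist_eq, abs_lt]
    constructor <;> linarith
  apply habs_le _ _ _ _ _ hAε hBε
  · -- lower bound
    rw [hNsplit, add_div]
    have hterm1 : ((1 - δ) * ψ a * Real.exp (φ a / ε)) * Jm ε / D ε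
        = (1 - δ) * (Jm ε / Real.sqrt (π * ε / (2 * Q))) := by
      rw [hDdef]
      simp only
      have h2 : Real.sqrt (π * ε / (2 * Q)) ≠ 0 := by
        refine ne_of_gt (Real.sqrt_pos.2 (by positivity))
      field_simp
    have h3 : ((1 - δ) * ψ a * Real.exp (φ a / ε)) * Jm ε / D ε
        ≤ (∫ x in Icc a (a + c), Real.exp (φ x / ε) * ψ x) / D ε :=
      div_le_div_of_nonneg_right hlower hDp.le
    have h4 : -(E ε) ≤ (∫ x in S ∩ Ioi (a + c), Real.exp (φ x / ε) * ψ x) / D ε := by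
      rw [hEdef]
      simp only
      rw [← neg_div]
      apply div_le_div_of_nonneg_right _ hDp.le
      have := neg_abs_le (∫ x in S ∩ Ioi (a + c), Real.exp (φ x / ε) * ψ x)
      linarith [htailb]
    rw [← hterm1]
    linarith
  · -- upper bound
    rw [hNsplit, add_div]
    have hterm1 : ((1 + δ) * ψ a * Real.exp (φ a / ε)) * Jp ε / D ε
        = (1 + δ) * (Jp ε / Real.sqrt (π * ε / (2 * Q))) := by
      rw [hDdef]
      simp only
      have h2 : Real.sqrt (π * ε / (2 * Q)) ≠ 0 := by
        refine ne_of_gt (Real.sqrt_pos.2 (by positivity))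
      field_simp
    have h3 : (∫ x in Icc a (a + c), Real.exp (φ x / ε) * ψ x) / D ε
        ≤ ((1 + δ) * ψ a * Real.exp (φ a / ε)) * Jp ε / D ε :=
      div_le_div_of_nonneg_right hupper hDp.le
    have h4 : (∫ x in S ∩ Ioi (a + c), Real.exp (φ x / ε) * ψ x) / D ε ≤ E ε := by
      rw [hEdef]
      simp only
      apply div_le_div_of_nonneg_right _ hDp.le
      have := le_abs_self (∫ x in S ∩ Ioi (a + c), Real.exp (φ x / ε) * ψ x)
      linarith [htailb]
    rw [← hterm1]
    linarith

end LaplaceAux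

/-- Laplace's method, boundary case with quadratic maximum: if `ψ` is continuous at `a`
(from the right) with `ψ a ≠ 0`, `φ` is `C²` on `[a, b)` with `φ' < 0` on `(a, b)`,
`φ' a = 0` and `φ'' a < 0`, and `f ε = ∫_a^b exp (φ x / ε) ψ x dx` is finite for small
`ε > 0`, then `f ε ~ sqrt (π ε / (2 |φ'' a|)) * exp (φ a / ε) * ψ a` as `ε → 0⁺`.
Here `b : EReal` may be `+∞`. -/
theorem laplace_method_boundary_quadratic (a : ℝ) (b : EReal) (hab : (a : EReal) < b)
    (φ ψ : ℝ → ℝ)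
    (hψ : ContinuousWithinAt ψ (Ici a) a) (hψa : ψ a ≠ 0)
    (hφ : ContDiffOn ℝ 2 φ {x : ℝ | a ≤ x ∧ (x : EReal) < b})
    (hφ' : ∀ x : ℝ, a < x → (x : EReal) < b → deriv φ x < 0)
    (hφ'a : deriv φ a = 0)
    (hφ''a : iteratedDeriv 2 φ a < 0)
    (hInt : ∀ᶠ ε in nhdsWithin (0 : ℝ) (Ioi 0),
      IntegrableOn (fun x => Real.exp (φ x / ε) * ψ x) {x : ℝ | a ≤ x ∧ (x : EReal) < b}) :
    Tendsto
      (fun ε : ℝ =>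
        (∫ x in {x : ℝ | a ≤ x ∧ (x : EReal) < b}, Real.exp (φ x / ε) * ψ x) /
          (Real.sqrt (Real.pi * ε / (2 * |iteratedDeriv 2 φ a|)) * Real.exp (φ a / ε) * ψ a))
      (nhdsWithin (0 : ℝ) (Ioi 0)) (nhds 1) := by
  rcases hψa.lt_or_gt with hneg | hpos
  · have hInt' : ∀ᶠ ε in nhdsWithin (0 : ℝ) (Ioi 0),
        IntegrableOn (fun x => Real.exp (φ x / ε) * (-ψ) x) {x : ℝ | a ≤ x ∧ (x : EReal) < b} := by
      filter_upwards [hInt] with ε hi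
      have : (fun x => Real.exp (φ x / ε) * (-ψ) x)
          = fun x => -(Real.exp (φ x / ε) * ψ x) := funext fun x => by
        simp [mul_neg]
      rw [this]
      exact hi.neg
    have h := lap_aux a b hab φ (-ψ) hψ.neg (by simpa using neg_pos.2 hneg) hφ hφ' hφ'a hφ''a hInt'
    apply h.congr
    intro ε
    have h1 : (∫ x in {x : ℝ | a ≤ x ∧ (x : EReal) < b}, Real.exp (φ x / ε) * (-ψ) x)
        = -∫ x in {x : ℝ | a ≤ x ∧ (x : EReal) < b}, Real.exp (φ x / ε) * ψ x := by
      rw [← MeasureTheory.integral_neg]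
      congr 1
      funext x
      simp [mul_neg]
    rw [h1]
    show _ / (_ * _ * (-ψ) a) = _
    rw [show ((-ψ) a : ℝ) = -ψ a from rfl, mul_neg, neg_div_neg_eq]
  · exact lap_aux a b hab φ ψ hψ hpos hφ hφ' hφ'a hφ''a hInt
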